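/- Let f : ℝ³ → ℝ be continuously differentiable with f_y(t,x,y) ≠ 0 for all (t,x,y) ∈ ℝ³ (f_y the partial derivative in the third argument), let h : ℝ³ → ℝ be continuously differentiable and satisfy f(t,x,h(t,x,w)) = w for all t,x,w ∈ ℝ, and let g : ℝ³ → ℝ be continuous. Define φ(t,u,w) = f_t(t,u,h(t,u,w)) + w·f_u(t,u,h(t,u,w)) + g(t,u,h(t,u,w))·f_y(t,u,h(t,u,w)). If s : I → ℝ is twice differentiable on an open interval I and satisfies s''(t) = φ(t, s(t), s'(t)) for all t ∈ I, then the pair x(t) := s(t), y(t) := h(t, s(t), s'(t)) is differentiable on I and solves the system x'(t) = f(t,x(t),y(t)), y'(t) = g(t,x(t),y(t)) on I. -/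

import Mathlib

/-- Unfolding: if `h` is a genuine partial inverse of `f` in its third variable and
`s` solves the folded scalar second-order equation `s̈ = φ(t,s,ṡ)` on an open
interval, then `x := s`, `y := h(t, s, ṡ)` solves the planar system
`ẋ = f(t,x,y)`, `ẏ = g(t,x,y)` there. -/
theorem unfolding_solves_system
    (f g h : ℝ → ℝ → ℝ → ℝ)
    (hf : ContDiff ℝ 1 (fun p : ℝ × ℝ × ℝ => f p.1 p.2.1 p.2.2))
    (hfy : ∀ t x y, deriv (fun r => f t x r) y ≠ 0)
    (hh : ContDiff ℝ 1 (fun p : ℝ × ℝ × ℝ => h p.1 p.2.1 p.2.2))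
    (hinv : ∀ t x w, f t x (h t x w) = w)
    (hg : Continuous (fun p : ℝ × ℝ × ℝ => g p.1 p.2.1 p.2.2))
    (a b : ℝ) (s : ℝ → ℝ)
    (hs : ∀ t ∈ Set.Ioo a b, DifferentiableAt ℝ s t)
    (hs2 : ∀ t ∈ Set.Ioo a b,
      HasDerivAt (deriv s)
        (deriv (fun r => f r (s t) (h t (s t) (deriv s t))) t
          + deriv s t * deriv (fun r => f t r (h t (s t) (deriv s t))) (s t)
          + g t (s t) (h t (s t) (deriv s t))
              * deriv (fun r => f t (s t) r) (h t (s t) (deriv s t))) t) :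
    ∀ t ∈ Set.Ioo a b,
      HasDerivAt s (f t (s t) (h t (s t) (deriv s t))) t ∧
      HasDerivAt (fun r => h r (s r) (deriv s r))
        (g t (s t) (h t (s t) (deriv s t))) t := by
  intro t ht
  have hst := hs t ht
  have hs2t := hs2 t ht
  set w := deriv s t with hw
  set yv := h t (s t) w with hyv
  -- first equation
  have part1 : HasDerivAt s (f t (s t) (h t (s t) (deriv s t))) t := by
    rw [hinv]; exact hst.hasDerivAt
  refine ⟨part1, ?_⟩
  -- fderiv of f at the relevant point
  set F : ℝ × ℝ × ℝ → ℝ := fun p => f p.1 p.2.1 p.2.2 with hFdef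
  set D := fderiv ℝ F (t, s t, yv) with hD
  have hDf : HasFDerivAt F D (t, s t, yv) :=
    ((hf.differentiable one_ne_zero) (t, s t, yv)).hasFDerivAt
  -- partial derivatives identified with D applied to basis vectors
  have hpd1 : deriv (fun r => f r (s t) yv) t = D (1, 0, 0) := by
    have hc : HasDerivAt (fun r : ℝ => (r, s t, yv)) ((1 : ℝ), (0 : ℝ), (0 : ℝ)) t :=
      (hasDerivAt_id t).prodMk ((hasDerivAt_const t _).prodMk (hasDerivAt_const t _))
    exact (hDf.comp_hasDerivAt t hc).deriv
  have hpd2 : deriv (fun r => f t r yv) (s t) = D (0, 1, 0) := by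
    have hc : HasDerivAt (fun r : ℝ => (t, r, yv)) ((0 : ℝ), (1 : ℝ), (0 : ℝ)) (s t) :=
      (hasDerivAt_const _ _).prodMk ((hasDerivAt_id _).prodMk (hasDerivAt_const _ _))
    exact (hDf.comp_hasDerivAt _ hc).deriv
  have hpd3 : deriv (fun r => f t (s t) r) yv = D (0, 0, 1) := by
    have hc : HasDerivAt (fun r : ℝ => (t, s t, r)) ((0 : ℝ), (0 : ℝ), (1 : ℝ)) yv :=
      (hasDerivAt_const _ _).prodMk ((hasDerivAt_const _ _).prodMk (hasDerivAt_id _))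
    exact (hDf.comp_hasDerivAt _ hc).deriv
  -- abbreviation for the second-derivative value
  set A := deriv (fun r => f r (s t) yv) t + w * deriv (fun r => f t r yv) (s t)
      + g t (s t) yv * deriv (fun r => f t (s t) r) yv with hA
  -- the curve r ↦ (r, s r, s' r)
  have hγ : HasDerivAt (fun r : ℝ => (r, s r, deriv s r)) ((1 : ℝ), w, A) t :=
    (hasDerivAt_id t).prodMk (hst.hasDerivAt.prodMk hs2t)
  -- y := h(r, s r, s' r) is differentiable at t
  set H : ℝ × ℝ × ℝ → ℝ := fun p => h p.1 p.2.1 p.2.2 with hHdef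
  have hDh : HasFDerivAt H (fderiv ℝ H (t, s t, w)) (t, s t, w) :=
    ((hh.differentiable one_ne_zero) (t, s t, w)).hasFDerivAt
  set y' := fderiv ℝ H (t, s t, w) ((1 : ℝ), w, A) with hy'
  have hyd : HasDerivAt (fun r => h r (s r) (deriv s r)) y' t :=
    by have := hDh.comp_hasDerivAt t hγ; exact this
  -- the curve r ↦ (r, s r, y r), composed with f, is deriv s
  have hγ2 : HasDerivAt (fun r : ℝ => (r, s r, h r (s r) (deriv s r))) ((1 : ℝ), w, y') t :=
    (hasDerivAt_id t).prodMk (hst.hasDerivAt.prodMk hyd)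
  have hcomp : HasDerivAt (fun r => f r (s r) (h r (s r) (deriv s r))) (D (1, w, y')) t :=
    by have := hDf.comp_hasDerivAt t hγ2; exact this
  have hfun : (fun r => f r (s r) (h r (s r) (deriv s r))) = deriv s :=
    funext fun r => hinv r (s r) (deriv s r)
  rw [hfun] at hcomp
  have huniq : D (1, w, y') = A := hcomp.unique hs2t
  -- expand D by linearity
  have hexp : ∀ u v c : ℝ, D (u, v, c) = u * D (1, 0, 0) + v * D (0, 1, 0) + c * D (0, 0, 1) := by
    intro u v c
    have : ((u, v, c) : ℝ × ℝ × ℝ) = u • ((1 : ℝ), (0 : ℝ), (0 : ℝ))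
        + v • ((0 : ℝ), (1 : ℝ), (0 : ℝ)) + c • ((0 : ℝ), (0 : ℝ), (1 : ℝ)) := by
      simp [Prod.ext_iff]
    rw [this, map_add, map_add, map_smul, map_smul, map_smul, smul_eq_mul, smul_eq_mul,
      smul_eq_mul]
  rw [hexp, one_mul] at huniq
  rw [hA, hpd1, hpd2, hpd3] at huniq
  have hne := hfy t (s t) yv
  rw [hpd3] at hne
  have hval : y' = g t (s t) yv := by
    have h3 : y' * D (0, 0, 1) = g t (s t) yv * D (0, 0, 1) := by linarith
    exact mul_right_cancel₀ hne h3
  rw [← hval]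
  exact hyd
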